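/- Re(conj(sinh(ξ+iη+ξ'+iη'))·sinh(ξ+iη)·sinh(ξ'+iη')) = ½|sinh(ξ+iη)|²·sinh(2ξ') + ½|sinh(ξ'+iη')|²·sinh(2ξ). In particular this real part is strictly positive when ξ, ξ' > 0. -/

import Mathlib

open Complex in
lemma sinh_mk_re (x y : ℝ) : (Complex.sinh ((x:ℂ) + (y:ℂ)*I)).re = Real.sinh x * Real.cos y := by
  rw [Complex.sinh_add, Complex.sinh_mul_I, Complex.cosh_mul_I, ← Complex.ofReal_sinh,
    ← Complex.ofReal_cosh, ← Complex.ofReal_cos, ← Complex.ofReal_sin]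
  simp [Complex.sinh_ofReal_re, Complex.cosh_ofReal_re, Complex.cos_ofReal_re, Complex.sin_ofReal_re]

open Complex in
lemma sinh_mk_im (x y : ℝ) : (Complex.sinh ((x:ℂ) + (y:ℂ)*I)).im = Real.cosh x * Real.sin y := by
  rw [Complex.sinh_add, Complex.sinh_mul_I, Complex.cosh_mul_I, ← Complex.ofReal_sinh,
    ← Complex.ofReal_cosh, ← Complex.ofReal_cos, ← Complex.ofReal_sin]
  simp [Complex.sinh_ofReal_re, Complex.cosh_ofReal_re, Complex.cos_ofReal_re, Complex.sin_ofReal_re]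

open Complex in
lemma cosh_mk_re (x y : ℝ) : (Complex.cosh ((x:ℂ) + (y:ℂ)*I)).re = Real.cosh x * Real.cos y := by
  rw [Complex.cosh_add, Complex.sinh_mul_I, Complex.cosh_mul_I, ← Complex.ofReal_sinh,
    ← Complex.ofReal_cosh, ← Complex.ofReal_cos, ← Complex.ofReal_sin]
  simp [Complex.sinh_ofReal_re, Complex.cosh_ofReal_re, Complex.cos_ofReal_re, Complex.sin_ofReal_re]

open Complex in
lemma cosh_mk_im (x y : ℝ) : (Complex.cosh ((x:ℂ) + (y:ℂ)*I)).im = Real.sinh x * Real.sin y := by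
  rw [Complex.cosh_add, Complex.sinh_mul_I, Complex.cosh_mul_I, ← Complex.ofReal_sinh,
    ← Complex.ofReal_cosh, ← Complex.ofReal_cos, ← Complex.ofReal_sin]
  simp [Complex.sinh_ofReal_re, Complex.cosh_ofReal_re, Complex.cos_ofReal_re, Complex.sin_ofReal_re]

lemma sq_sinh_abs_ge (x y : ℝ) :
    Real.sinh x ^ 2 ≤ ‖Complex.sinh ((x:ℂ) + (y:ℂ)*Complex.I)‖ ^ 2 := by
  rw [Complex.sq_norm, Complex.normSq_apply, sinh_mk_re, sinh_mk_im]
  nlinarith [Real.sin_sq_add_cos_sq y, Real.cosh_sq_sub_sinh_sq x,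
    sq_nonneg (Real.sin y), sq_nonneg (Real.cos y)]

theorem re_conj_sinh_product (ξ ξ' η η' : ℝ) :
    ((starRingEnd ℂ) (Complex.sinh (((ξ : ℂ) + (η : ℂ) * Complex.I)
          + ((ξ' : ℂ) + (η' : ℂ) * Complex.I))) *
        Complex.sinh ((ξ : ℂ) + (η : ℂ) * Complex.I) *
        Complex.sinh ((ξ' : ℂ) + (η' : ℂ) * Complex.I)).re =
      (1 / 2) * (‖Complex.sinh ((ξ : ℂ) + (η : ℂ) * Complex.I)‖) ^ 2
          * Real.sinh (2 * ξ')
        + (1 / 2) * (‖Complex.sinh ((ξ' : ℂ) + (η' : ℂ) * Complex.I)‖) ^ 2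
          * Real.sinh (2 * ξ) ∧
    (0 < ξ → 0 < ξ' →
      0 < ((starRingEnd ℂ) (Complex.sinh (((ξ : ℂ) + (η : ℂ) * Complex.I)
          + ((ξ' : ℂ) + (η' : ℂ) * Complex.I))) *
        Complex.sinh ((ξ : ℂ) + (η : ℂ) * Complex.I) *
        Complex.sinh ((ξ' : ℂ) + (η' : ℂ) * Complex.I)).re) := by
  have key : ((starRingEnd ℂ) (Complex.sinh (((ξ : ℂ) + (η : ℂ) * Complex.I)
          + ((ξ' : ℂ) + (η' : ℂ) * Complex.I))) *
        Complex.sinh ((ξ : ℂ) + (η : ℂ) * Complex.I) *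
        Complex.sinh ((ξ' : ℂ) + (η' : ℂ) * Complex.I)).re =
      (1 / 2) * (‖Complex.sinh ((ξ : ℂ) + (η : ℂ) * Complex.I)‖) ^ 2
          * Real.sinh (2 * ξ')
        + (1 / 2) * (‖Complex.sinh ((ξ' : ℂ) + (η' : ℂ) * Complex.I)‖) ^ 2
          * Real.sinh (2 * ξ) := by
    rw [Complex.sinh_add, Complex.sq_norm, Complex.sq_norm,
      Complex.normSq_apply, Complex.normSq_apply]
    simp only [Complex.mul_re, Complex.mul_im, Complex.add_re, Complex.add_im,
      Complex.conj_re, Complex.conj_im, sinh_mk_re, sinh_mk_im, cosh_mk_re, cosh_mk_im,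
      Real.sinh_two_mul]
    have h1 := Real.sin_sq_add_cos_sq η
    have h2 := Real.sin_sq_add_cos_sq η'
    linear_combination ((Real.sinh ξ * Real.cos η)^2 + (Real.cosh ξ * Real.sin η)^2)
        * Real.sinh ξ' * Real.cosh ξ' * h2
      + ((Real.sinh ξ' * Real.cos η')^2 + (Real.cosh ξ' * Real.sin η')^2)
        * Real.sinh ξ * Real.cosh ξ * h1
  refine ⟨key, fun hξ hξ' => ?_⟩
  rw [key]
  have a1 := sq_sinh_abs_ge ξ η
  have a2 := sq_sinh_abs_ge ξ' η'
  have s1 : 0 < Real.sinh ξ := Real.sinh_pos_iff.2 hξ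
  have s2 : 0 < Real.sinh ξ' := Real.sinh_pos_iff.2 hξ'
  have t1 : 0 < Real.sinh (2 * ξ) := Real.sinh_pos_iff.2 (by linarith)
  have t2 : 0 < Real.sinh (2 * ξ') := Real.sinh_pos_iff.2 (by linarith)
  nlinarith [mul_pos (mul_pos s1 s1) t2, mul_pos (mul_pos s2 s2) t1, mul_le_mul_of_nonneg_right a1 t2.le, mul_le_mul_of_nonneg_right a2 t1.le]
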